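/- Let λ be a positive integer. Define, for functions f₀, f₁ : Fin (2^λ) → Fin (2^(3*λ)), the decryption function Dec_{f₀,f₁} (x, y) = some false if f₀ x = y, else some true if f₁ x = y, else none. If f₀ and f₁ are drawn independently and uniformly at random from all functions Fin (2^λ) → Fin (2^(3*λ)), then for every bit b : Bool and every x : Fin (2^λ), the probability that decryption of the honest ciphertext fails is at most 2^{-λ}: Pr[Dec_{f₀,f₁} (x, (if b then f₁ else f₀) x) ≠ some b] ≤ 1 / 2^λ. -/

import Mathlib

open scoped ENNReal

theorem aux (lam : ℕ) (hlam : 0 < lam) (x : Fin (2 ^ lam)) :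
    ∑' (p : (Fin (2 ^ lam) → Fin (2 ^ (3 * lam))) × (Fin (2 ^ lam) → Fin (2 ^ (3 * lam)))),
      ({p : (Fin (2 ^ lam) → Fin (2 ^ (3 * lam))) × (Fin (2 ^ lam) → Fin (2 ^ (3 * lam))) | p.1 x = p.2 x}).indicator
        (⇑(PMF.uniformOfFintype ((Fin (2 ^ lam) → Fin (2 ^ (3 * lam))) × (Fin (2 ^ lam) → Fin (2 ^ (3 * lam)))))) p
      ≤ 1 / 2 ^ lam := by
  classical
  set F := Fin (2 ^ lam) → Fin (2 ^ (3 * lam)) with hF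
  set B := Fin (2 ^ (3 * lam)) with hB
  set G := ({ j : Fin (2 ^ lam) // j ≠ x } → B) with hG
  set c : ℝ≥0∞ := (↑(Fintype.card (F × F)))⁻¹ with hc
  have he : ∀ q : B × G, ((Equiv.funSplitAt x B).symm q) x = q.1 := by
    intro q
    rw [Equiv.funSplitAt, Equiv.piSplitAt_symm_apply, dif_pos rfl]
  have h1 : ∀ p : F × F,
      ({p : F × F | p.1 x = p.2 x}).indicator (⇑(PMF.uniformOfFintype (F × F))) p
        = if p.1 x = p.2 x then c else 0 := by
    intro p
    rw [Set.indicator_apply]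
    simp [hc, PMF.uniformOfFintype_apply, Set.mem_setOf_eq]
  rw [tsum_fintype]
  rw [Finset.sum_congr rfl (fun p _ => h1 p)]
  rw [Fintype.sum_prod_type]
  have h2 : ∀ f₀ : F, ∑ f₁ : F, (if f₀ x = f₁ x then c else 0)
      = (Fintype.card G : ℝ≥0∞) * c := by
    intro f₀
    rw [← Equiv.sum_comp (Equiv.funSplitAt x B).symm (fun f₁ => if f₀ x = f₁ x then c else 0)]
    simp only [he]
    rw [Fintype.sum_prod_type]
    rw [Finset.sum_eq_single (f₀ x)]
    · have hv : ∀ y : G, (if f₀ x = ((f₀ x : B), y).1 then c else 0) = c := fun y => if_pos rfl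
      rw [Finset.sum_congr rfl (fun y _ => hv y), Finset.sum_const, Finset.card_univ, nsmul_eq_mul]
    · intro v _ hv
      simp [Ne.symm hv]
    · simp
  rw [Finset.sum_congr rfl (fun f₀ _ => h2 f₀)]
  rw [Finset.sum_const, Finset.card_univ, nsmul_eq_mul]
  have hcard : Fintype.card F = Fintype.card B * Fintype.card G :=
    (Fintype.card_congr (Equiv.funSplitAt x B)).trans (Fintype.card_prod _ _)
  have hGne : ((Fintype.card G : ℝ≥0∞)) ≠ 0 := by exact_mod_cast Fintype.card_pos.ne'
  have hBne : ((Fintype.card B : ℝ≥0∞)) ≠ 0 := by exact_mod_cast Fintype.card_pos.ne'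
  have hGtop : ((Fintype.card G : ℝ≥0∞)) ≠ ⊤ := ENNReal.natCast_ne_top _
  have hBtop : ((Fintype.card B : ℝ≥0∞)) ≠ ⊤ := ENNReal.natCast_ne_top _
  have key : (Fintype.card F : ℝ≥0∞) * ((Fintype.card G : ℝ≥0∞) * c)
      = (Fintype.card B : ℝ≥0∞)⁻¹ := by
    rw [hc, Fintype.card_prod, hcard]
    push_cast
    rw [ENNReal.mul_inv (Or.inl (mul_ne_zero hBne hGne)) (Or.inr (mul_ne_zero hBne hGne))]
    rw [ENNReal.mul_inv (Or.inl hBne) (Or.inr hGne)]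
    rw [show (Fintype.card B : ℝ≥0∞) * (Fintype.card G : ℝ≥0∞) *
          ((Fintype.card G : ℝ≥0∞) * ((Fintype.card B : ℝ≥0∞)⁻¹ * (Fintype.card G : ℝ≥0∞)⁻¹ *
            ((Fintype.card B : ℝ≥0∞)⁻¹ * (Fintype.card G : ℝ≥0∞)⁻¹)))
        = ((Fintype.card B : ℝ≥0∞) * (Fintype.card B : ℝ≥0∞)⁻¹) *
          (((Fintype.card G : ℝ≥0∞) * (Fintype.card G : ℝ≥0∞)⁻¹) *
            (((Fintype.card G : ℝ≥0∞) * (Fintype.card G : ℝ≥0∞)⁻¹) * (Fintype.card B : ℝ≥0∞)⁻¹)) by ring]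
    rw [ENNReal.mul_inv_cancel hBne hBtop, ENNReal.mul_inv_cancel hGne hGtop]
    simp
  rw [key, one_div]
  apply ENNReal.inv_le_inv.2
  rw [show Fintype.card B = 2 ^ (3*lam) from Fintype.card_fin _]
  rw [show ((2:ℝ≥0∞) ^ lam) = ((2 ^ lam : ℕ) : ℝ≥0∞) by push_cast; ring]
  exact_mod_cast Nat.pow_le_pow_right (by norm_num) (by omega)

/-- Idealized correctness: for independent uniformly random functions
`f₀, f₁ : Fin (2^λ) → Fin (2^(3λ))`, for every bit `b` and input `x`, the
probability that decryption of the honest ciphertext `(x, f_b x)` fails is at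
most `2^{-λ}`. -/
theorem stmt_3 (lam : ℕ) (hlam : 0 < lam) (b : Bool) (x : Fin (2 ^ lam)) :
    (PMF.uniformOfFintype
        ((Fin (2 ^ lam) → Fin (2 ^ (3 * lam))) ×
          (Fin (2 ^ lam) → Fin (2 ^ (3 * lam))))).toOuterMeasure
      {p | (fun xy : Fin (2 ^ lam) × Fin (2 ^ (3 * lam)) =>
              if p.1 xy.1 = xy.2 then some false
              else if p.2 xy.1 = xy.2 then some true
              else none)
            (x, (if b then p.2 else p.1) x) ≠ some b} ≤ 1 / 2 ^ lam := by
  classical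
  cases b
  · have hs : {p : (Fin (2 ^ lam) → Fin (2 ^ (3 * lam))) × (Fin (2 ^ lam) → Fin (2 ^ (3 * lam))) |
        (fun xy : Fin (2 ^ lam) × Fin (2 ^ (3 * lam)) => if p.1 xy.1 = xy.2 then some false
          else if p.2 xy.1 = xy.2 then some true else none)
          (x, (if false then p.2 else p.1) x) ≠ some false} = ∅ := by
      ext p; simp
    rw [hs]
    simp
  · have hs : {p : (Fin (2 ^ lam) → Fin (2 ^ (3 * lam))) × (Fin (2 ^ lam) → Fin (2 ^ (3 * lam))) |
        (fun xy : Fin (2 ^ lam) × Fin (2 ^ (3 * lam)) => if p.1 xy.1 = xy.2 then some false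
          else if p.2 xy.1 = xy.2 then some true else none)
          (x, (if true then p.2 else p.1) x) ≠ some true} =
        {p : (Fin (2 ^ lam) → Fin (2 ^ (3 * lam))) × (Fin (2 ^ lam) → Fin (2 ^ (3 * lam))) | p.1 x = p.2 x} := by
      ext p
      by_cases h : p.1 x = p.2 x <;> simp [h]
    rw [hs, PMF.toOuterMeasure_apply]
    exact aux lam hlam x
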